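/- Let Z be a standard normal random variable. For every t ≥ 0, (1/√(2π)) · (1/(t+1)) · e^{-t²/2} ≤ Pr[Z ≥ t] ≤ (1/√π) · (1/(t+1)) · e^{-t²/2}. -/

import Mathlib

open MeasureTheory ProbabilityTheory Real

noncomputable def swAux (x : ℝ) : ℝ := (x ^ 2 + x + 1) / (x + 1) ^ 2 * Real.exp (-x ^ 2 / 2)

lemma swAux_nonneg {x : ℝ} (hx : 0 ≤ x) : 0 ≤ swAux x := by
  unfold swAux; positivity

lemma swAux_le {x : ℝ} (hx : 0 ≤ x) : swAux x ≤ Real.exp (-x ^ 2 / 2) := by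
  unfold swAux
  have h1 : (0:ℝ) < (x + 1) ^ 2 := by positivity
  have : (x ^ 2 + x + 1) / (x + 1) ^ 2 ≤ 1 := by
    rw [div_le_one h1]; nlinarith
  nlinarith [Real.exp_pos (-x ^ 2 / 2)]

lemma swAux_ge {x : ℝ} (hx : 0 ≤ x) :
    (Real.sqrt 2)⁻¹ * Real.exp (-x ^ 2 / 2) ≤ swAux x := by
  have h2 : (4:ℝ)/3 ≤ Real.sqrt 2 := by
    rw [show (4:ℝ)/3 = Real.sqrt ((4/3)^2) by rw [Real.sqrt_sq]; norm_num]
    apply Real.sqrt_le_sqrt; norm_num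
  have hs : (0:ℝ) < Real.sqrt 2 := by positivity
  have h1 : (0:ℝ) < (x + 1) ^ 2 := by positivity
  have key : (Real.sqrt 2)⁻¹ ≤ (x ^ 2 + x + 1) / (x + 1) ^ 2 := by
    rw [le_div_iff₀ h1, inv_mul_le_iff₀ hs]
    calc (x+1)^2 ≤ (4/3) * (x^2+x+1) := by nlinarith [sq_nonneg (x-1)]
    _ ≤ Real.sqrt 2 * (x^2+x+1) := by nlinarith
  unfold swAux
  have := Real.exp_pos (-x ^ 2 / 2)
  nlinarith

lemma swAux_integrableOn {t : ℝ} (ht : 0 ≤ t) : IntegrableOn swAux (Set.Ioi t) := by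
  have hbound : IntegrableOn (fun x : ℝ => Real.exp (-(1/2) * x ^ 2)) (Set.Ioi t) :=
    (integrable_exp_neg_mul_sq (by norm_num : (0:ℝ) < 1/2)).restrict
  apply hbound.mono'
  · apply ContinuousOn.aestronglyMeasurable _ measurableSet_Ioi
    apply ContinuousOn.mul
    · apply ContinuousOn.div (by fun_prop) (by fun_prop)
      intro x hx
      have : (0:ℝ) < x + 1 := by simp only [Set.mem_Ioi] at hx; linarith
      positivity
    · fun_prop
  · filter_upwards [ae_restrict_mem measurableSet_Ioi] with x hx
    simp only [Set.mem_Ioi] at hx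
    have hx0 : 0 ≤ x := le_trans ht hx.le
    rw [Real.norm_eq_abs, abs_of_nonneg (swAux_nonneg hx0)]
    calc swAux x ≤ Real.exp (-x ^ 2 / 2) := swAux_le hx0
    _ = Real.exp (-(1/2) * x ^ 2) := by ring_nf

lemma swAux_integral {t : ℝ} (ht : 0 ≤ t) :
    ∫ x in Set.Ioi t, swAux x = Real.exp (-t ^ 2 / 2) / (t + 1) := by
  have := MeasureTheory.integral_Ioi_of_hasDerivAt_of_tendsto
    (f := fun x : ℝ => -(Real.exp (-x ^ 2 / 2) / (x + 1))) (f' := swAux) (a := t) (m := 0)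
    ?_ ?_ (swAux_integrableOn ht) ?_
  · rw [this]; ring
  · apply ContinuousAt.continuousWithinAt
    apply ContinuousAt.neg
    exact ContinuousAt.div (by fun_prop) (by fun_prop) (by intro h; linarith)
  · intro x hx
    simp only [Set.mem_Ioi] at hx
    have hx1 : x + 1 ≠ 0 := by linarith
    have hexp : HasDerivAt (fun x : ℝ => Real.exp (-x ^ 2 / 2)) (-x * Real.exp (-x ^ 2 / 2)) x := by
      have h1 : HasDerivAt (fun x : ℝ => -x ^ 2 / 2) (-x) x := by
        have := ((hasDerivAt_pow 2 x).neg).div_const 2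
        simpa using this.congr_deriv (by ring)
      simpa [mul_comm] using h1.exp
    have hden : HasDerivAt (fun x : ℝ => x + 1) 1 x := by
      simpa using (hasDerivAt_id x).add_const 1
    have := (hexp.div hden hx1).neg
    convert this using 1
    · funext y; rfl
    unfold swAux
    field_simp
    ring
  · have h1 : Filter.Tendsto (fun x : ℝ => Real.exp (-x ^ 2 / 2)) Filter.atTop (nhds 0) := by
      apply Real.tendsto_exp_atBot.comp
      have hsq : Filter.Tendsto (fun x : ℝ => x ^ 2 / 2) Filter.atTop Filter.atTop :=
        (Filter.tendsto_pow_atTop two_ne_zero).atTop_div_const (by norm_num)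
      have := Filter.tendsto_neg_atTop_atBot.comp hsq
      apply this.congr
      intro x; simp; ring
    have h2 : Filter.Tendsto (fun x : ℝ => x + 1) Filter.atTop Filter.atTop :=
      Filter.tendsto_atTop_add_const_right _ _ Filter.tendsto_id
    have := (Filter.Tendsto.div_atTop h1 h2).neg
    simpa using this

theorem gaussian_tail_bounds (t : ℝ) (ht : 0 ≤ t) :
    ENNReal.ofReal ((1 / Real.sqrt (2 * π)) * (1 / (t + 1)) * Real.exp (-t ^ 2 / 2))
        ≤ gaussianReal 0 1 (Set.Ici t) ∧
    gaussianReal 0 1 (Set.Ici t)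
        ≤ ENNReal.ofReal ((1 / Real.sqrt π) * (1 / (t + 1)) * Real.exp (-t ^ 2 / 2)) := by
  have hIci : gaussianReal 0 1 (Set.Ici t)
      = ENNReal.ofReal (∫ x in Set.Ioi t, gaussianPDFReal 0 1 x) := by
    rw [gaussianReal_apply_eq_integral 0 one_ne_zero,
      MeasureTheory.integral_Ici_eq_integral_Ioi]
  have hpdf : ∀ x : ℝ, gaussianPDFReal 0 1 x = (Real.sqrt (2 * π))⁻¹ * Real.exp (-x ^ 2 / 2) := by
    intro x
    simp [gaussianPDFReal]
  have hpdfInt : IntegrableOn (gaussianPDFReal 0 1) (Set.Ioi t) :=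
    (integrable_gaussianPDFReal 0 1).restrict
  have hswInt := swAux_integrableOn ht
  have hswI := swAux_integral ht
  have hsqrt2pi : (0:ℝ) < Real.sqrt (2 * π) := Real.sqrt_pos.mpr (by positivity)
  have hsplit : Real.sqrt (2 * π) = Real.sqrt 2 * Real.sqrt π :=
    Real.sqrt_mul (by norm_num) π
  constructor
  · rw [hIci]
    apply ENNReal.ofReal_le_ofReal
    have : (1 / Real.sqrt (2 * π)) * (1 / (t + 1)) * Real.exp (-t ^ 2 / 2)
        = ∫ x in Set.Ioi t, (Real.sqrt (2 * π))⁻¹ * swAux x := by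
      rw [MeasureTheory.integral_const_mul, hswI]
      field_simp
    rw [this]
    apply MeasureTheory.setIntegral_mono_on (hswInt.const_mul _) hpdfInt measurableSet_Ioi
    intro x hx
    simp only [Set.mem_Ioi] at hx
    have hx0 : 0 ≤ x := le_trans ht hx.le
    rw [hpdf]
    have := swAux_le hx0
    have h2 : (0:ℝ) ≤ (Real.sqrt (2 * π))⁻¹ := by positivity
    nlinarith
  · rw [hIci]
    apply ENNReal.ofReal_le_ofReal
    have : (1 / Real.sqrt π) * (1 / (t + 1)) * Real.exp (-t ^ 2 / 2)
        = ∫ x in Set.Ioi t, (Real.sqrt π)⁻¹ * swAux x := by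
      rw [MeasureTheory.integral_const_mul, hswI]
      field_simp
    rw [this]
    apply MeasureTheory.setIntegral_mono_on hpdfInt (hswInt.const_mul _) measurableSet_Ioi
    intro x hx
    simp only [Set.mem_Ioi] at hx
    have hx0 : 0 ≤ x := le_trans ht hx.le
    rw [hpdf]
    have hge := swAux_ge hx0
    have hπ : (0:ℝ) < Real.sqrt π := Real.sqrt_pos.mpr Real.pi_pos
    have h2 : (0:ℝ) < Real.sqrt 2 := by positivity
    calc (Real.sqrt (2 * π))⁻¹ * Real.exp (-x ^ 2 / 2)
        = (Real.sqrt π)⁻¹ * ((Real.sqrt 2)⁻¹ * Real.exp (-x ^ 2 / 2)) := by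
          rw [hsplit, mul_inv]; ring
    _ ≤ (Real.sqrt π)⁻¹ * swAux x := by
          apply mul_le_mul_of_nonneg_left hge (by positivity)
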